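/- Homological perturbation lemma for chain complexes. Let k be a ring in which 2 = 0 and let C and Z be k-modules equipped with k-linear maps d : C → C and δ : Z → Z satisfying d ∘ d = 0 and δ ∘ δ = 0. Let α : C → C be a k-linear map satisfying the Maurer–Cartan equation α ∘ α + d ∘ α + α ∘ d = 0 (so that (d + α) ∘ (d + α) = 0). Suppose (i, π, h) is a strong deformation retraction from (C, d) onto (Z, δ): π ∘ d = δ ∘ π, d ∘ i = i ∘ δ, π ∘ i = id_Z, i ∘ π = id_C + d ∘ h + h ∘ d, h ∘ h = 0, h ∘ i = 0 and π ∘ h = 0. Assume id_C + h ∘ α is invertible in the endomorphism ring of C. Then id_C + α ∘ h is also invertible, and, setting β = π ∘ α ∘ (id + h ∘ α)⁻¹ ∘ i, Π = π ∘ (id + α ∘ h)⁻¹, H = (id + h ∘ α)⁻¹ ∘ h and I = (id + h ∘ α)⁻¹ ∘ i, the following hold: β ∘ β + δ ∘ β + β ∘ δ = 0 (so (δ + β) ∘ (δ + β) = 0); Π ∘ (d + α) = (δ + β) ∘ Π; (d + α) ∘ I = I ∘ (δ + β); Π ∘ I = id_Z; I ∘ Π = id_C + (d + α) ∘ H + H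 ∘ (d + α); H ∘ H = 0; H ∘ I = 0; and Π ∘ H = 0. That is, (I, Π, H) is a strong deformation retraction from (C, d + α) onto (Z, δ + β). -/
import Mathlib

set_option maxHeartbeats 2000000 in
/-- Homological perturbation lemma for chain complexes over a ring in which `2 = 0`. -/
theorem homological_perturbation_lemma
    {k : Type*} [CommRing k] (h2 : (2 : k) = 0)
    {C Z : Type*} [AddCommGroup C] [AddCommGroup Z] [Module k C] [Module k Z]
    (d α h : C →ₗ[k] C) (δ : Z →ₗ[k] Z)
    (i : Z →ₗ[k] C) (π : C →ₗ[k] Z)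
    (hdd : d ∘ₗ d = 0) (hδδ : δ ∘ₗ δ = 0)
    (hMC : α ∘ₗ α + d ∘ₗ α + α ∘ₗ d = 0)
    (hπd : π ∘ₗ d = δ ∘ₗ π) (hdi : d ∘ₗ i = i ∘ₗ δ)
    (hπi : π ∘ₗ i = LinearMap.id)
    (hiπ : i ∘ₗ π = LinearMap.id + d ∘ₗ h + h ∘ₗ d)
    (hhh : h ∘ₗ h = 0) (hhi : h ∘ₗ i = 0) (hπh : π ∘ₗ h = 0)
    (hinv : IsUnit ((1 : Module.End k C) + h ∘ₗ α)) :
    IsUnit ((1 : Module.End k C) + α ∘ₗ h) ∧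
    (let G : C →ₗ[k] C := Ring.inverse ((1 : Module.End k C) + h ∘ₗ α)
     let G' : C →ₗ[k] C := Ring.inverse ((1 : Module.End k C) + α ∘ₗ h)
     let β : Z →ₗ[k] Z := π ∘ₗ α ∘ₗ G ∘ₗ i
     let Pr : C →ₗ[k] Z := π ∘ₗ G'
     let H : C →ₗ[k] C := G ∘ₗ h
     let I : Z →ₗ[k] C := G ∘ₗ i
     (β ∘ₗ β + δ ∘ₗ β + β ∘ₗ δ = 0) ∧
     (Pr ∘ₗ (d + α) = (δ + β) ∘ₗ Pr) ∧
     ((d + α) ∘ₗ I = I ∘ₗ (δ + β)) ∧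
     (Pr ∘ₗ I = LinearMap.id) ∧
     (I ∘ₗ Pr = LinearMap.id + (d + α) ∘ₗ H + H ∘ₗ (d + α)) ∧
     (H ∘ₗ H = 0) ∧ (H ∘ₗ I = 0) ∧ (Pr ∘ₗ H = 0)) := by
  -- characteristic-2 facts
  have twoC : ∀ x : C, x + x = 0 := fun x => by rw [← two_smul k x, h2, zero_smul]
  have z2C : ∀ x : C, (2 : ℤ) • x = 0 := fun x => by rw [two_zsmul]; exact twoC x
  have twoZ : ∀ z : Z, z + z = 0 := fun z => by rw [← two_smul k z, h2, zero_smul]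
  have z2Z : ∀ z : Z, (2 : ℤ) • z = 0 := fun z => by rw [two_zsmul]; exact twoZ z
  have addcancelC : ∀ a b : C, (a + b) + a = b := fun a b => by
    calc (a + b) + a = b + (a + a) := by abel
    _ = b := by rw [twoC, add_zero]
  set g : Module.End k C := Ring.inverse ((1 : Module.End k C) + h ∘ₗ α) with hg
  -- element versions of the hypotheses
  have edd : ∀ x : C, d (d x) = 0 := fun x => LinearMap.congr_fun hdd x
  have ehh : ∀ x : C, h (h x) = 0 := fun x => LinearMap.congr_fun hhh x
  have eπi : ∀ z : Z, π (i z) = z := fun z => LinearMap.congr_fun hπi z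
  have ehi : ∀ z : Z, h (i z) = 0 := fun z => LinearMap.congr_fun hhi z
  have eπh : ∀ x : C, π (h x) = 0 := fun x => LinearMap.congr_fun hπh x
  have eiπ : ∀ x : C, i (π x) = x + d (h x) + h (d x) := fun x => LinearMap.congr_fun hiπ x
  have eδπ : ∀ x : C, δ (π x) = π (d x) := fun x => (LinearMap.congr_fun hπd x).symm
  have eiδ : ∀ z : Z, i (δ z) = d (i z) := fun z => (LinearMap.congr_fun hdi z).symm
  have eMC : ∀ x : C, d (α x) = α (α x) + α (d x) := by
    intro x
    have e := LinearMap.congr_fun hMC x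
    simp only [LinearMap.add_apply, LinearMap.comp_apply, LinearMap.zero_apply] at e
    calc d (α x) = (α (α x) + d (α x) + α (d x)) + (α (α x) + α (d x)) := by
          abel_nf; simp [z2C]
      _ = α (α x) + α (d x) := by rw [e, zero_add]
  -- facts about g
  have eGl : ∀ x : C, g x + h (α (g x)) = x := by
    intro x
    have e := LinearMap.congr_fun (Ring.mul_inverse_cancel _ hinv) x
    simpa [Module.End.mul_apply, ← hg] using e
  have eGr : ∀ x : C, g x + g (h (α x)) = x := by
    intro x
    have e := LinearMap.congr_fun (Ring.inverse_mul_cancel _ hinv) x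
    simpa [Module.End.mul_apply, ← hg] using e
  have s11 : ∀ x : C, h (α (g x)) = x + g x := fun x =>
    (addcancelC (g x) (h (α (g x)))).symm.trans (by rw [eGl, add_comm])
  have s12 : ∀ x : C, g (h (α x)) = x + g x := fun x =>
    (addcancelC (g x) (g (h (α x)))).symm.trans (by rw [eGr, add_comm])
  have sG : ∀ x : C, g x = x + h (α (g x)) := fun x =>
    (addcancelC (h (α (g x))) (g x)).symm.trans
      (by rw [add_comm (h (α (g x))) (g x), eGl, add_comm])
  have s10 : ∀ x : C, h (g x) = h x := fun x => by
    rw [sG x, map_add, ehh, add_zero]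
  have s13 : ∀ x : C, π (g x) = π x := fun x => by
    rw [sG x, map_add, eπh, add_zero]
  -- the perturbed retraction data
  have e1 : ((1 : Module.End k C) + α ∘ₗ h) * ((1 : Module.End k C) + α ∘ₗ (g ∘ₗ h)) = 1 := by
    apply LinearMap.ext; intro x
    simp only [Module.End.mul_apply, LinearMap.add_apply, LinearMap.comp_apply,
      Module.End.one_apply, map_add, s11, s10, s12, ehh, map_zero]
    abel_nf
    simp [z2C]
  have e2 : ((1 : Module.End k C) + α ∘ₗ (g ∘ₗ h)) * ((1 : Module.End k C) + α ∘ₗ h) = 1 := by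
    apply LinearMap.ext; intro x
    simp only [Module.End.mul_apply, LinearMap.add_apply, LinearMap.comp_apply,
      Module.End.one_apply, map_add, s11, s10, s12, ehh, map_zero]
    abel_nf
    simp [z2C]
  have hu' : IsUnit ((1 : Module.End k C) + α ∘ₗ h) :=
    ⟨⟨(1 : Module.End k C) + α ∘ₗ h, (1 : Module.End k C) + α ∘ₗ (g ∘ₗ h), e1, e2⟩, rfl⟩
  have hG' : Ring.inverse ((1 : Module.End k C) + α ∘ₗ h)
      = (1 : Module.End k C) + α ∘ₗ (g ∘ₗ h) :=
    Ring.inverse_unit ⟨(1 : Module.End k C) + α ∘ₗ h,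
      (1 : Module.End k C) + α ∘ₗ (g ∘ₗ h), e1, e2⟩
  rw [hG']
  refine ⟨hu', ?_, ?_, ?_, ?_, ?_, ?_, ?_, ?_⟩ <;>
  · apply LinearMap.ext; intro x
    simp only [LinearMap.add_apply, LinearMap.comp_apply, LinearMap.zero_apply,
      LinearMap.id_apply, Module.End.one_apply, map_add, map_zero,
      eiπ, eδπ, eiδ, eπi, ehi, eπh, ehh, edd, eMC, s10, s11, s12, s13]
    try abel_nf
    try simp [z2C, z2Z]
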